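/- Let G be a group of C¹ diffeomorphisms of ℝ², let F = {x ∈ ℝ² : g(x) = x for all g ∈ G} be its set of global fixed points, and let x ∈ F be a non-isolated point of F. Then there exists a unit vector v ∈ ℝ² such that Dg_x(v) = v for every g ∈ G, where Dg_x denotes the derivative of g at x. -/

import Mathlib

open Filter Asymptotics

noncomputable section

/-- The group of self-homeomorphisms of a space, with `(f * g) x = f (g x)`. -/
instance homeomorphGroup {X : Type*} [TopologicalSpace X] : Group (X ≃ₜ X) where
  mul f g := g.trans f
  one := Homeomorph.refl X
  inv := Homeomorph.symm
  mul_assoc a b c := Homeomorph.ext fun _ => rfl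
  one_mul a := Homeomorph.ext fun _ => rfl
  mul_one a := Homeomorph.ext fun _ => rfl
  inv_mul_cancel a := Homeomorph.ext a.symm_apply_apply

/-- Let `G` be a group of `C¹` diffeomorphisms of the plane (a subgroup of the
homeomorphism group all of whose elements are `C¹` with `C¹` inverse), let `F` be
its set of global fixed points, and let `x ∈ F` be a non-isolated point of `F`.
Then there is a unit vector `v` fixed by the derivative at `x` of every element
of `G`. -/
theorem stmt_14
    (G : Subgroup (EuclideanSpace ℝ (Fin 2) ≃ₜ EuclideanSpace ℝ (Fin 2)))
    (hG : ∀ g ∈ G, ContDiff ℝ 1 ⇑g ∧ ContDiff ℝ 1 ⇑g.symm)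
    (F : Set (EuclideanSpace ℝ (Fin 2)))
    (hF : F = {x | ∀ g ∈ G, g x = x})
    (x : EuclideanSpace ℝ (Fin 2)) (hx : x ∈ F)
    (hnoniso : x ∈ closure (F \ {x})) :
    ∃ v : EuclideanSpace ℝ (Fin 2), ‖v‖ = 1 ∧
      ∀ g ∈ G, fderiv ℝ (⇑g) x v = v := by
  obtain ⟨u, hu, hulim⟩ := mem_closure_iff_seq_limit.1 hnoniso
  have hne : ∀ n, u n - x ≠ 0 := fun n => sub_ne_zero.2 (hu n).2
  set v : ℕ → EuclideanSpace ℝ (Fin 2) := fun n => ‖u n - x‖⁻¹ • (u n - x) with hv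
  have hvnorm : ∀ n, ‖v n‖ = 1 := by
    intro n
    rw [hv]
    simp [norm_smul, inv_mul_cancel₀ (norm_ne_zero_iff.2 (hne n))]
  have hvs : ∀ n, v n ∈ Metric.sphere (0 : EuclideanSpace ℝ (Fin 2)) 1 := by
    intro n; simpa [mem_sphere_zero_iff_norm] using hvnorm n
  obtain ⟨v0, hv0s, φ, hφ, hvlim⟩ :=
    (isCompact_sphere (0 : EuclideanSpace ℝ (Fin 2)) 1).tendsto_subseq hvs
  refine ⟨v0, mem_sphere_zero_iff_norm.1 hv0s, ?_⟩
  intro g hg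
  have hdiff : DifferentiableAt ℝ g x := ((hG g hg).1.differentiable one_ne_zero) x
  set f := fderiv ℝ (⇑g) x with hf
  have hfd : HasFDerivAt (⇑g) f x := hdiff.hasFDerivAt
  have hlo : (fun y => g y - g x - f (y - x)) =o[nhds x] fun y => y - x :=
    hfd.isLittleO
  have hgx : g x = x := by rw [hF] at hx; exact hx g hg
  have hgu : ∀ n, g (u n) = u n := by
    intro n
    have := (hu n).1
    rw [hF] at this
    exact this g hg
  have hlo2 : (fun n => u n - x - f (u n - x)) =o[atTop] fun n => u n - x := by
    have := hlo.comp_tendsto hulim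
    simpa only [Function.comp_def, hgx, hgu] using this
  have htend0 : Tendsto (fun n => ‖u n - x - f (u n - x)‖ / ‖u n - x‖) atTop (nhds 0) :=
    hlo2.norm_norm.tendsto_div_nhds_zero
  have hkey : Tendsto (fun n => v n - f (v n)) atTop (nhds 0) := by
    rw [tendsto_zero_iff_norm_tendsto_zero]
    convert htend0 using 2 with n
    rw [hv]
    rw [map_smul, ← smul_sub, norm_smul, norm_inv, norm_norm, div_eq_inv_mul]
  have h1 : Tendsto (fun n => v (φ n) - f (v (φ n))) atTop (nhds 0) :=
    hkey.comp hφ.tendsto_atTop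
  have h2 : Tendsto (fun n => v (φ n) - f (v (φ n))) atTop (nhds (v0 - f v0)) :=
    hvlim.sub ((f.continuous.tendsto v0).comp hvlim)
  have h3 := tendsto_nhds_unique h2 h1
  exact (sub_eq_zero.1 h3).symm


end
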